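/- Let λ : ℕ → (0,∞) satisfy λ(n) = o(n) and lim_{n→∞} λ(n) = ∞, and fix an arbitrarily small ε > 0. For each n, let C_n be a Bernoulli(p(n)) random m(n)×n test matrix with p(n) = 1/⌈λ(n)^{1+ε}⌉ and m(n) = ⌈e·(⌈λ(n)^{1+ε}⌉)²·log n⌉ = e·λ(n)^{2(1+ε)}·log n·(1+o(1)), drawn independently of the defective set 𝒟_n of the Poisson PGT model on n subjects with parameter λ(n), and let D̂_n be the output of the cover decoder applied to C_n and the outcome vector. Then P(D̂_n ≠ 𝒟_n) → 0 as n → ∞. -/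

import Mathlib

open Filter Finset

/-- `P(𝒟 = S)` in the Poisson PGT model on `n` subjects with parameter `lam`. -/
noncomputable def pgtWeight (n : ℕ) (lam : ℝ) (S : Finset (Fin n)) : ℝ :=
  (Real.exp lam / ∑ d ∈ Finset.range (n + 1), lam ^ d / d.factorial) *
    lam ^ S.card * Real.exp (-lam) * (n - S.card).factorial / n.factorial

/-- Probability of a realization `C` of an i.i.d. Bernoulli(p) random test matrix. -/
noncomputable def bernWeight {m n : ℕ} (p : ℝ) (C : Fin m → Fin n → Bool) : ℝ :=
  ∏ j : Fin m, ∏ i : Fin n, if C j i then p else 1 - p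

/-- Outcome vector: test `j` is positive iff some defective participates in it. -/
def outcome {m n : ℕ} (C : Fin m → Fin n → Bool) (S : Finset (Fin n)) : Fin m → Bool :=
  fun j => decide (∃ i ∈ S, C j i = true)

/-- The cover decoder: `D̂ = {i : supp(x_i) ⊆ supp(y)}`. -/
def coverDecoder {m n : ℕ} (C : Fin m → Fin n → Bool) (y : Fin m → Bool) : Finset (Fin n) :=
  Finset.univ.filter (fun i => ∀ j, C j i = true → y j = true)

/-- Error probability of the cover decoder with an i.i.d. Bernoulli(p) test matrix of
`mn` tests, drawn independently of the defective set of the Poisson PGT model. -/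
noncomputable def errProbCover (n mn : ℕ) (lam p : ℝ) : ℝ :=
  ∑ C : Fin mn → Fin n → Bool, ∑ S : Finset (Fin n),
    bernWeight p C * pgtWeight n lam S *
      (if coverDecoder C (outcome C S) ≠ S then 1 else 0)

lemma sum_fun_prod {α β : Type*} [Fintype α] [DecidableEq α] [Fintype β] (g : α → β → ℝ) :
    ∑ f : α → β, ∏ a : α, g a (f a) = ∏ a : α, ∑ b : β, g a b := by
  rw [← Finset.sum_prod_piFinset Finset.univ g, Fintype.piFinset_univ]

lemma sum_row_weight {n : ℕ} (p : ℝ) (T U : Finset (Fin n)) (hTU : Disjoint T U) :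
    ∑ r : Fin n → Bool, (∏ i, if r i then p else 1 - p) *
      (if (∀ i ∈ T, r i = true) ∧ (∀ i ∈ U, r i = false) then (1:ℝ) else 0)
    = p ^ T.card * (1 - p) ^ U.card := by
  classical
  have key : ∀ r : Fin n → Bool,
      (∏ i, if r i then p else 1 - p) *
        (if (∀ i ∈ T, r i = true) ∧ (∀ i ∈ U, r i = false) then (1:ℝ) else 0)
      = ∏ i, ((if r i then p else 1 - p) *
          ((if i ∈ T then (if r i then (1:ℝ) else 0) else 1) *
           (if i ∈ U then (if r i then (0:ℝ) else 1) else 1))) := by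
    intro r
    rw [Finset.prod_mul_distrib, Finset.prod_mul_distrib]
    congr 1
    by_cases h : (∀ i ∈ T, r i = true) ∧ (∀ i ∈ U, r i = false)
    · rw [if_pos h]
      rw [Finset.prod_eq_one, Finset.prod_eq_one, mul_one]
      · intro i _
        by_cases hiU : i ∈ U
        · simp [hiU, h.2 i hiU]
        · simp [hiU]
      · intro i _
        by_cases hiT : i ∈ T
        · simp [hiT, h.1 i hiT]
        · simp [hiT]
    · rw [if_neg h]
      rcases not_and_or.mp h with h1 | h2
      · push_neg at h1
        obtain ⟨i, hiT, hri⟩ := h1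
        rw [Finset.prod_eq_zero (Finset.mem_univ i), zero_mul]
        simp [hiT, hri]
      · push_neg at h2
        obtain ⟨i, hiU, hri⟩ := h2
        have : r i = true := by simpa using hri
        rw [mul_comm, Finset.prod_eq_zero (Finset.mem_univ i), zero_mul]
        simp [hiU, this]
  simp_rw [key]
  rw [sum_fun_prod (fun (i : Fin n) (b : Bool) => ((if b then p else 1 - p) *
          ((if i ∈ T then (if b then (1:ℝ) else 0) else 1) *
           (if i ∈ U then (if b then (0:ℝ) else 1) else 1))))]
  have hval : ∀ i : Fin n, (∑ b : Bool, ((if b then p else 1 - p) *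
          ((if i ∈ T then (if b then (1:ℝ) else 0) else 1) *
           (if i ∈ U then (if b then (0:ℝ) else 1) else 1))))
      = (if i ∈ T then p else 1) * (if i ∈ U then 1 - p else 1) := by
    intro i
    rw [Fintype.sum_bool]
    by_cases hiT : i ∈ T
    · have hiU : i ∉ U := Finset.disjoint_left.mp hTU hiT
      simp [hiT, hiU]
    · by_cases hiU : i ∈ U <;> simp [hiT, hiU]
  simp_rw [hval]
  rw [Finset.prod_mul_distrib, Fintype.prod_ite_mem, Fintype.prod_ite_mem,
    Finset.prod_const, Finset.prod_const]

lemma rowWeight_total {n : ℕ} (p : ℝ) :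
    ∑ r : Fin n → Bool, (∏ i, if r i then p else 1 - p) = 1 := by
  have := sum_row_weight (n := n) p ∅ ∅ (by simp)
  simpa using this

lemma bern_total {mn n : ℕ} (p : ℝ) :
    ∑ C : Fin mn → Fin n → Bool, bernWeight p C = 1 := by
  unfold bernWeight
  rw [sum_fun_prod (fun (j : Fin mn) (r : Fin n → Bool) => ∏ i, if r i then p else 1 - p)]
  rw [Finset.prod_eq_one]
  intro j _
  exact rowWeight_total p

lemma bernWeight_nonneg {mn n : ℕ} {p : ℝ} (h0 : 0 ≤ p) (h1 : p ≤ 1)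
    (C : Fin mn → Fin n → Bool) : 0 ≤ bernWeight p C := by
  unfold bernWeight
  apply Finset.prod_nonneg; intro j _
  apply Finset.prod_nonneg; intro i _
  split <;> linarith

lemma sum_bern_covered {mn n : ℕ} (p : ℝ) (S : Finset (Fin n)) (i : Fin n) (hi : i ∉ S) :
    ∑ C : Fin mn → Fin n → Bool, bernWeight p C *
      (if i ∈ coverDecoder C (outcome C S) then (1:ℝ) else 0)
    = (1 - p * (1 - p) ^ S.card) ^ mn := by
  classical
  have hmem : ∀ (C : Fin mn → Fin n → Bool),
      (i ∈ coverDecoder C (outcome C S)) ↔ ∀ j, (C j i = true → ∃ i' ∈ S, C j i' = true) := by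
    intro C
    simp [coverDecoder, outcome]
  have key : ∀ C : Fin mn → Fin n → Bool,
      bernWeight p C * (if i ∈ coverDecoder C (outcome C S) then (1:ℝ) else 0)
      = ∏ j, ((∏ i', if C j i' then p else 1 - p) *
          (if (C j i = true → ∃ i' ∈ S, C j i' = true) then (1:ℝ) else 0)) := by
    intro C
    rw [Finset.prod_mul_distrib, Finset.prod_boole]
    unfold bernWeight
    congr 1
    simp only [hmem]
    simp
  simp_rw [key]
  rw [sum_fun_prod (fun (j : Fin mn) (r : Fin n → Bool) =>
      (∏ i', if r i' then p else 1 - p) *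
        (if (r i = true → ∃ i' ∈ S, r i' = true) then (1:ℝ) else 0))]
  have hrow : (∑ r : Fin n → Bool, (∏ i', if r i' then p else 1 - p) *
      (if (r i = true → ∃ i' ∈ S, r i' = true) then (1:ℝ) else 0))
      = 1 - p * (1 - p) ^ S.card := by
    have hsplit : ∀ r : Fin n → Bool,
        (if (r i = true → ∃ i' ∈ S, r i' = true) then (1:ℝ) else 0)
        = 1 - (if (∀ i' ∈ ({i} : Finset (Fin n)), r i' = true) ∧ (∀ i' ∈ S, r i' = false)
            then (1:ℝ) else 0) := by
      intro r
      by_cases h : r i = true → ∃ i' ∈ S, r i' = true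
      · rw [if_pos h, if_neg, sub_zero]
        rintro ⟨h1, h2⟩
        obtain ⟨i', hi', hri'⟩ := h (h1 i (Finset.mem_singleton_self i))
        rw [h2 i' hi'] at hri'; exact Bool.false_ne_true hri'
      · rw [if_neg h, if_pos]
        · ring
        · push_neg at h
          refine ⟨by simpa using h.1, fun i' hi' => ?_⟩
          have := h.2 i' hi'
          simpa [Bool.not_eq_true] using this
    simp_rw [hsplit, mul_sub, mul_one]
    rw [Finset.sum_sub_distrib, rowWeight_total,
      sum_row_weight p {i} S (Finset.disjoint_singleton_left.mpr hi)]
    simp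
  simp_rw [hrow]
  simp [Finset.prod_const]

lemma subset_cover {mn n : ℕ} (C : Fin mn → Fin n → Bool) (S : Finset (Fin n)) :
    S ⊆ coverDecoder C (outcome C S) := by
  intro i hi
  simp only [coverDecoder, Finset.mem_filter, Finset.mem_univ, true_and]
  intro j hj
  simp only [outcome, decide_eq_true_eq]
  exact ⟨i, hi, hj⟩

lemma q_nonneg {p : ℝ} (h0 : 0 ≤ p) (h1 : p ≤ 1) (s : ℕ) :
    0 ≤ 1 - p * (1 - p) ^ s := by
  have h2 : (1 - p) ^ s ≤ 1 := pow_le_one₀ (by linarith) (by linarith)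
  nlinarith [pow_nonneg (by linarith : (0:ℝ) ≤ 1 - p) s]

lemma err_le {mn n : ℕ} {p : ℝ} (hp0 : 0 ≤ p) (hp1 : p ≤ 1) (S : Finset (Fin n)) :
    ∑ C : Fin mn → Fin n → Bool, bernWeight p C *
      (if coverDecoder C (outcome C S) ≠ S then (1:ℝ) else 0)
    ≤ n * (1 - p * (1 - p) ^ S.card) ^ mn := by
  classical
  have step1 : ∀ C : Fin mn → Fin n → Bool,
      bernWeight p C * (if coverDecoder C (outcome C S) ≠ S then (1:ℝ) else 0)
      ≤ ∑ i ∈ Sᶜ, bernWeight p C * (if i ∈ coverDecoder C (outcome C S) then (1:ℝ) else 0) := by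
    intro C
    by_cases h : coverDecoder C (outcome C S) = S
    · rw [if_neg (by simp [h]), mul_zero]
      apply Finset.sum_nonneg
      intro i _
      apply mul_nonneg (bernWeight_nonneg hp0 hp1 C)
      split <;> norm_num
    · rw [if_pos h, mul_one]
      have hss : S ⊂ coverDecoder C (outcome C S) :=
        (subset_cover C S).ssubset_of_ne (Ne.symm h)
      obtain ⟨i, hicov, hiS⟩ := Finset.exists_of_ssubset hss
      calc bernWeight p C = bernWeight p C * (if i ∈ coverDecoder C (outcome C S) then (1:ℝ) else 0) := by
            rw [if_pos hicov, mul_one]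
        _ ≤ _ := by
            apply Finset.single_le_sum (f := fun i =>
              bernWeight p C * (if i ∈ coverDecoder C (outcome C S) then (1:ℝ) else 0))
            · intro i _
              apply mul_nonneg (bernWeight_nonneg hp0 hp1 C)
              split <;> norm_num
            · simpa using hiS
  calc ∑ C : Fin mn → Fin n → Bool, bernWeight p C *
        (if coverDecoder C (outcome C S) ≠ S then (1:ℝ) else 0)
      ≤ ∑ C : Fin mn → Fin n → Bool, ∑ i ∈ Sᶜ,
          bernWeight p C * (if i ∈ coverDecoder C (outcome C S) then (1:ℝ) else 0) :=
        Finset.sum_le_sum (fun C _ => step1 C)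
    _ = ∑ i ∈ Sᶜ, ∑ C : Fin mn → Fin n → Bool,
          bernWeight p C * (if i ∈ coverDecoder C (outcome C S) then (1:ℝ) else 0) :=
        Finset.sum_comm
    _ = ∑ i ∈ Sᶜ, (1 - p * (1 - p) ^ S.card) ^ mn := by
        apply Finset.sum_congr rfl
        intro i hi
        exact sum_bern_covered p S i (by simpa using hi)
    _ = (Sᶜ.card : ℝ) * (1 - p * (1 - p) ^ S.card) ^ mn := by rw [Finset.sum_const, nsmul_eq_mul]
    _ ≤ n * (1 - p * (1 - p) ^ S.card) ^ mn := by
        apply mul_le_mul_of_nonneg_right _ (pow_nonneg (q_nonneg hp0 hp1 _) _)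
        have : Sᶜ.card ≤ n := by
          calc Sᶜ.card ≤ (Finset.univ : Finset (Fin n)).card := Finset.card_le_card (Finset.subset_univ _)
            _ = n := by simp
        exact_mod_cast this

lemma err_le_one {mn n : ℕ} {p : ℝ} (hp0 : 0 ≤ p) (hp1 : p ≤ 1) (S : Finset (Fin n)) :
    ∑ C : Fin mn → Fin n → Bool, bernWeight p C *
      (if coverDecoder C (outcome C S) ≠ S then (1:ℝ) else 0) ≤ 1 := by
  calc ∑ C : Fin mn → Fin n → Bool, bernWeight p C *
        (if coverDecoder C (outcome C S) ≠ S then (1:ℝ) else 0)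
      ≤ ∑ C : Fin mn → Fin n → Bool, bernWeight p C := by
        apply Finset.sum_le_sum
        intro C _
        have := bernWeight_nonneg (mn := mn) (n := n) hp0 hp1 C
        split <;> nlinarith
    _ = 1 := bern_total p

lemma Z_pos {n : ℕ} {lam : ℝ} (h : 0 < lam) :
    0 < ∑ d ∈ Finset.range (n + 1), lam ^ d / (d.factorial : ℝ) := by
  apply Finset.sum_pos
  · intro d _
    positivity
  · exact Finset.nonempty_range_iff.mpr (Nat.succ_ne_zero n)

lemma pgt_nonneg {n : ℕ} {lam : ℝ} (h : 0 < lam) (S : Finset (Fin n)) :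
    0 ≤ pgtWeight n lam S := by
  unfold pgtWeight
  have := Z_pos (n := n) h
  positivity

lemma pgt_sum_card {n : ℕ} {lam : ℝ} (h : 0 < lam) {d : ℕ} (hd : d ≤ n) :
    ∑ S ∈ Finset.powersetCard d (Finset.univ : Finset (Fin n)), pgtWeight n lam S
      = (lam ^ d / d.factorial) / (∑ k ∈ Finset.range (n + 1), lam ^ k / k.factorial) := by
  have hconst : ∀ S ∈ Finset.powersetCard d (Finset.univ : Finset (Fin n)),
      pgtWeight n lam S = (Real.exp lam / ∑ k ∈ Finset.range (n + 1), lam ^ k / k.factorial) *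
        lam ^ d * Real.exp (-lam) * (n - d).factorial / n.factorial := by
    intro S hS
    have : S.card = d := (Finset.mem_powersetCard.mp hS).2
    rw [pgtWeight, this]
  rw [Finset.sum_congr rfl hconst, Finset.sum_const, Finset.card_powersetCard, Finset.card_univ,
    Fintype.card_fin, nsmul_eq_mul]
  have hfact : ((n.choose d : ℝ)) * (d.factorial : ℝ) * ((n - d).factorial : ℝ) = (n.factorial : ℝ) := by
    exact_mod_cast congrArg (Nat.cast : ℕ → ℝ) (Nat.choose_mul_factorial_mul_factorial hd)
  have hZ := Z_pos (n := n) h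
  have hnf : (n.factorial : ℝ) ≠ 0 := Nat.cast_ne_zero.mpr n.factorial_ne_zero
  have hdf : (d.factorial : ℝ) ≠ 0 := Nat.cast_ne_zero.mpr d.factorial_ne_zero
  have hexp : Real.exp lam * Real.exp (-lam) = 1 := by
    rw [← Real.exp_add]; simp
  set Z := ∑ k ∈ Finset.range (n + 1), lam ^ k / (k.factorial : ℝ) with hZdef
  field_simp
  linear_combination ((n.choose d : ℝ) * (d.factorial : ℝ) * ((n - d).factorial : ℝ)) * hexp + hfact

lemma errProbCover_le (n mn K : ℕ) {lam p : ℝ} (hl : 0 < lam) (hp0 : 0 ≤ p) (hp1 : p ≤ 1) :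
    errProbCover n mn lam p ≤
      n * (1 - p * (1 - p) ^ K) ^ mn +
        (∑ d ∈ Finset.Ioc K n, lam ^ d / d.factorial) /
          (∑ d ∈ Finset.range (n + 1), lam ^ d / d.factorial) := by
  classical
  set Z := ∑ d ∈ Finset.range (n + 1), lam ^ d / (d.factorial : ℝ) with hZdef
  have hZ : 0 < Z := Z_pos hl
  set A : ℝ := n * (1 - p * (1 - p) ^ K) ^ mn with hAdef
  have hA : 0 ≤ A := by
    apply mul_nonneg (Nat.cast_nonneg n)
    exact pow_nonneg (q_nonneg hp0 hp1 K) mn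
  have step1 : errProbCover n mn lam p = ∑ S : Finset (Fin n), pgtWeight n lam S *
      (∑ C : Fin mn → Fin n → Bool, bernWeight p C *
        (if coverDecoder C (outcome C S) ≠ S then (1:ℝ) else 0)) := by
    rw [errProbCover, Finset.sum_comm]
    apply Finset.sum_congr rfl
    intro S _
    rw [Finset.mul_sum]
    apply Finset.sum_congr rfl
    intro C _
    ring
  rw [step1]
  have step2 : ∑ S : Finset (Fin n), pgtWeight n lam S *
      (∑ C : Fin mn → Fin n → Bool, bernWeight p C *
        (if coverDecoder C (outcome C S) ≠ S then (1:ℝ) else 0))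
      = ∑ j ∈ Finset.range (n + 1), ∑ S ∈ Finset.powersetCard j (Finset.univ : Finset (Fin n)),
          pgtWeight n lam S *
      (∑ C : Fin mn → Fin n → Bool, bernWeight p C *
        (if coverDecoder C (outcome C S) ≠ S then (1:ℝ) else 0)) := by
    rw [← Finset.powerset_univ, Finset.sum_powerset, Finset.card_univ, Fintype.card_fin]
  rw [step2]
  have inner_le : ∀ j ∈ Finset.range (n + 1),
      (∑ S ∈ Finset.powersetCard j (Finset.univ : Finset (Fin n)),
        pgtWeight n lam S *
          (∑ C : Fin mn → Fin n → Bool, bernWeight p C *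
            (if coverDecoder C (outcome C S) ≠ S then (1:ℝ) else 0)))
      ≤ (if j ≤ K then (lam ^ j / j.factorial) / Z * A else (lam ^ j / j.factorial) / Z) := by
    intro j hj
    have hjn : j ≤ n := Nat.lt_succ_iff.mp (Finset.mem_range.mp hj)
    by_cases hjK : j ≤ K
    · rw [if_pos hjK, ← pgt_sum_card hl hjn, Finset.sum_mul]
      apply Finset.sum_le_sum
      intro S hS
      have hcard : S.card = j := (Finset.mem_powersetCard.mp hS).2
      apply mul_le_mul_of_nonneg_left _ (pgt_nonneg hl S)
      calc (∑ C : Fin mn → Fin n → Bool, bernWeight p C *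
            (if coverDecoder C (outcome C S) ≠ S then (1:ℝ) else 0))
          ≤ n * (1 - p * (1 - p) ^ S.card) ^ mn := err_le hp0 hp1 S
        _ ≤ A := by
            rw [hAdef]
            apply mul_le_mul_of_nonneg_left _ (Nat.cast_nonneg n)
            apply pow_le_pow_left₀ (q_nonneg hp0 hp1 _)
            have : (1 - p) ^ K ≤ (1 - p) ^ S.card := by
              apply pow_le_pow_of_le_one (by linarith) (by linarith)
              omega
            nlinarith
    · rw [if_neg hjK, ← pgt_sum_card hl hjn]
      apply Finset.sum_le_sum
      intro S hS
      have h1 := err_le_one (mn := mn) hp0 hp1 S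
      have h2 := pgt_nonneg hl S
      nlinarith
  calc (∑ j ∈ Finset.range (n + 1), ∑ S ∈ Finset.powersetCard j (Finset.univ : Finset (Fin n)),
          pgtWeight n lam S *
      (∑ C : Fin mn → Fin n → Bool, bernWeight p C *
        (if coverDecoder C (outcome C S) ≠ S then (1:ℝ) else 0)))
      ≤ ∑ j ∈ Finset.range (n + 1),
          (if j ≤ K then (lam ^ j / j.factorial) / Z * A else (lam ^ j / j.factorial) / Z) :=
      Finset.sum_le_sum inner_le
    _ = (∑ j ∈ (Finset.range (n + 1)).filter (fun j => j ≤ K), (lam ^ j / j.factorial) / Z * A)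
        + ∑ j ∈ (Finset.range (n + 1)).filter (fun j => ¬ j ≤ K), (lam ^ j / j.factorial) / Z := by
      rw [Finset.sum_ite]
    _ ≤ A + (∑ d ∈ Finset.Ioc K n, lam ^ d / d.factorial) / Z := by
      apply add_le_add
      · calc (∑ j ∈ (Finset.range (n + 1)).filter (fun j => j ≤ K), (lam ^ j / j.factorial) / Z * A)
            ≤ (∑ j ∈ Finset.range (n + 1), (lam ^ j / j.factorial) / Z * A) := by
              apply Finset.sum_le_sum_of_subset_of_nonneg (Finset.filter_subset _ _)
              intro j _ _
              have : 0 < lam ^ j / (j.factorial : ℝ) := by positivity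
              positivity
          _ = (∑ j ∈ Finset.range (n + 1), lam ^ j / (j.factorial : ℝ)) / Z * A := by
              rw [Finset.sum_div, Finset.sum_mul]
          _ = A := by rw [← hZdef, div_self (ne_of_gt hZ), one_mul]
      · have hfilter : (Finset.range (n + 1)).filter (fun j => ¬ j ≤ K) = Finset.Ioc K n := by
          ext j
          simp only [Finset.mem_filter, Finset.mem_range, Finset.mem_Ioc, not_le]
          omega
        rw [hfilter, Finset.sum_div]
    _ = _ := by rw [hAdef]

lemma geom_sum_le (f : ℕ → ℝ) (a : ℕ) (hf0 : ∀ d, 0 ≤ f d)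
    (hhalf : ∀ d, a ≤ d → f (d + 1) ≤ f d / 2) (b : ℕ) :
    ∑ d ∈ Finset.Ico a b, f d ≤ 2 * f a := by
  rcases le_or_gt b a with hba | hab
  · rw [Finset.Ico_eq_empty (by omega : ¬ a < b), Finset.sum_empty]
    linarith [hf0 a]
  · have key : ∀ c, a ≤ c → ∑ d ∈ Finset.Ico a c, f d ≤ 2 * f a - 2 * f c := by
      intro c hc
      induction c, hc using Nat.le_induction with
      | base => simp
      | succ c hc ih =>
        rw [Finset.sum_Ico_succ_top hc]
        have := hhalf c hc
        linarith
    have := key b (le_of_lt hab)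
    linarith [hf0 b]

lemma fact_term_le {lam : ℝ} (hl : 0 ≤ lam) (k : ℕ) (hk : 0 < k) :
    lam ^ k / k.factorial ≤ (Real.exp 1 * lam / k) ^ k := by
  have hkR : (0:ℝ) < k := by exact_mod_cast hk
  have hkf : (0:ℝ) < (k.factorial : ℝ) := by exact_mod_cast k.factorial_pos
  have h1 : (k:ℝ) ^ k / (k.factorial : ℝ) ≤ Real.exp k := by
    calc (k:ℝ) ^ k / (k.factorial : ℝ)
        ≤ ∑ i ∈ Finset.range (k + 1), (k:ℝ) ^ i / (i.factorial : ℝ) :=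
          Finset.single_le_sum (f := fun i => (k:ℝ) ^ i / (i.factorial : ℝ))
            (fun i _ => by positivity) (Finset.self_mem_range_succ k)
      _ ≤ Real.exp k := Real.sum_le_exp_of_nonneg (by positivity) _
  have h2 : (k:ℝ) ^ k ≤ Real.exp k * (k.factorial : ℝ) := by
    rw [div_le_iff₀ hkf] at h1; exact h1
  have h3 : (Real.exp 1 * lam / k) ^ k = Real.exp k * lam ^ k / (k:ℝ) ^ k := by
    rw [div_pow, mul_pow, ← Real.exp_nat_mul, mul_one]
  rw [h3, div_le_div_iff₀ hkf (by positivity)]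
  calc lam ^ k * (k:ℝ) ^ k ≤ lam ^ k * (Real.exp k * (k.factorial : ℝ)) := by
        apply mul_le_mul_of_nonneg_left h2 (by positivity)
    _ = Real.exp k * lam ^ k * (k.factorial : ℝ) := by ring

lemma Z_ge_one {n : ℕ} {lam : ℝ} (h1 : 1 ≤ lam) (hn : lam ≤ n) :
    1 ≤ ∑ d ∈ Finset.range (n + 1), lam ^ d / (d.factorial : ℝ) := by
  set L := ⌊lam⌋₊ with hL
  have hl0 : (0:ℝ) ≤ lam := by linarith
  have hLn : L ≤ n := by
    have := Nat.floor_le_floor hn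
    simpa using this
  have hLlam : (L:ℝ) ≤ lam := Nat.floor_le hl0
  have hterm : 1 ≤ lam ^ L / (L.factorial : ℝ) := by
    rw [le_div_iff₀ (by exact_mod_cast L.factorial_pos)]
    rw [one_mul]
    calc (L.factorial : ℝ) ≤ (L:ℝ) ^ L := by exact_mod_cast L.factorial_le_pow
      _ ≤ lam ^ L := pow_le_pow_left₀ (by positivity) hLlam L
  calc (1:ℝ) ≤ lam ^ L / (L.factorial : ℝ) := hterm
    _ ≤ ∑ d ∈ Finset.range (n + 1), lam ^ d / (d.factorial : ℝ) :=
      Finset.single_le_sum (f := fun d => lam ^ d / (d.factorial : ℝ))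
        (fun i _ => by positivity) (Finset.mem_range.mpr (by omega))

lemma tail_le {n K : ℕ} {lam : ℝ} (h1 : 1 ≤ lam) (hn : lam ≤ n)
    (hgeom : 2 * lam ≤ (K:ℝ) + 2) :
    (∑ d ∈ Finset.Ioc K n, lam ^ d / (d.factorial : ℝ)) /
        (∑ d ∈ Finset.range (n + 1), lam ^ d / (d.factorial : ℝ))
      ≤ 2 * (lam ^ (K + 1) / ((K + 1).factorial : ℝ)) := by
  have hl0 : (0:ℝ) ≤ lam := by linarith
  have hIoc : Finset.Ioc K n = Finset.Ico (K + 1) (n + 1) := by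
    ext d
    simp only [Finset.mem_Ioc, Finset.mem_Ico]
    omega
  have hnum : ∑ d ∈ Finset.Ioc K n, lam ^ d / (d.factorial : ℝ)
      ≤ 2 * (lam ^ (K + 1) / ((K + 1).factorial : ℝ)) := by
    rw [hIoc]
    apply geom_sum_le
    · intro d; positivity
    · intro d hd
      have hstep : lam ^ (d + 1) / ((d + 1).factorial : ℝ)
          = (lam ^ d / (d.factorial : ℝ)) * (lam / (d + 1)) := by
        rw [Nat.factorial_succ, pow_succ]
        push_cast
        field_simp
      rw [hstep]
      have hfrac : lam / ((d:ℝ) + 1) ≤ 1 / 2 := by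
        rw [div_le_div_iff₀ (by positivity) (by norm_num)]
        have : (K:ℝ) + 1 ≤ (d:ℝ) := by exact_mod_cast hd
        linarith
      have hpos : (0:ℝ) ≤ lam ^ d / (d.factorial : ℝ) := by positivity
      calc (lam ^ d / (d.factorial : ℝ)) * (lam / (d + 1))
          ≤ (lam ^ d / (d.factorial : ℝ)) * (1 / 2) := mul_le_mul_of_nonneg_left hfrac hpos
        _ = lam ^ d / (d.factorial : ℝ) / 2 := by ring
  have hnum0 : 0 ≤ ∑ d ∈ Finset.Ioc K n, lam ^ d / (d.factorial : ℝ) := by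
    apply Finset.sum_nonneg; intro d _; positivity
  calc (∑ d ∈ Finset.Ioc K n, lam ^ d / (d.factorial : ℝ)) /
        (∑ d ∈ Finset.range (n + 1), lam ^ d / (d.factorial : ℝ))
      ≤ ∑ d ∈ Finset.Ioc K n, lam ^ d / (d.factorial : ℝ) :=
        div_le_self hnum0 (Z_ge_one h1 hn)
    _ ≤ _ := hnum

lemma exp_neg_two_le {x : ℝ} (h0 : 0 ≤ x) (h2 : x ≤ 1 / 2) :
    Real.exp (-(2 * x)) ≤ 1 - x := by
  have hy : 1 + 2 * x ≤ Real.exp (2 * x) := by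
    have := Real.add_one_le_exp (2 * x); linarith
  have hz : 0 < Real.exp (-(2 * x)) := Real.exp_pos _
  have hzy : Real.exp (-(2 * x)) * Real.exp (2 * x) = 1 := by
    rw [← Real.exp_add]; simp
  nlinarith [mul_le_mul_of_nonneg_left hy (le_of_lt hz)]

lemma errProbCover_nonneg (n mn : ℕ) {lam p : ℝ} (hl : 0 < lam) (hp0 : 0 ≤ p) (hp1 : p ≤ 1) :
    0 ≤ errProbCover n mn lam p := by
  apply Finset.sum_nonneg; intro C _
  apply Finset.sum_nonneg; intro S _
  apply mul_nonneg (mul_nonneg (bernWeight_nonneg hp0 hp1 C) (pgt_nonneg hl S))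
  split <;> norm_num

set_option maxHeartbeats 1000000 in
theorem stmt1 (lam : ℕ → ℝ) (hpos : ∀ n, 0 < lam n)
    (hlamo : Tendsto (fun n => lam n / n) atTop (nhds 0))
    (hlaminf : Tendsto lam atTop atTop)
    (ε : ℝ) (hε : 0 < ε)
    (p : ℕ → ℝ) (hp : ∀ n, p n = 1 / (⌈lam n ^ ((1 : ℝ) + ε)⌉₊ : ℝ))
    (m : ℕ → ℕ)
    (hm : ∀ n, m n = ⌈Real.exp 1 * (⌈lam n ^ ((1 : ℝ) + ε)⌉₊ : ℝ) ^ 2 * Real.log n⌉₊) :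
    Tendsto (fun n => errProbCover n (m n) (lam n) (p n)) atTop (nhds 0) := by
  classical
  set K : ℕ → ℕ := fun n => ⌈lam n ^ ((1 : ℝ) + ε)⌉₊ with hKdef
  -- basic facts about p
  have hK1 : ∀ n, 1 ≤ K n := by
    intro n
    exact Nat.one_le_iff_ne_zero.mpr (Nat.ceil_pos.mpr (Real.rpow_pos_of_pos (hpos n) _)).ne'
  have hp0 : ∀ n, 0 ≤ p n := by
    intro n; rw [hp n]; positivity
  have hp1 : ∀ n, p n ≤ 1 := by
    intro n; rw [hp n]
    rw [div_le_one (by exact_mod_cast Nat.lt_of_lt_of_le Nat.zero_lt_one (hK1 n))]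
    exact_mod_cast hK1 n
  -- K tends to infinity
  have hrpow : Tendsto (fun n => lam n ^ ((1:ℝ) + ε)) atTop atTop :=
    (tendsto_rpow_atTop (by linarith : (0:ℝ) < 1 + ε)).comp hlaminf
  have hKR : Tendsto (fun n => (K n : ℝ)) atTop atTop := by
    apply tendsto_atTop_mono _ hrpow
    intro n
    exact Nat.le_ceil _
  have hKnat : Tendsto K atTop atTop := tendsto_natCast_atTop_iff.mp hKR
  -- the dominating sequence
  have hg : Tendsto (fun n : ℕ => (n:ℝ)⁻¹ + 2 * ((1/2:ℝ) ^ (K n + 1))) atTop (nhds 0) := by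
    have h1 : Tendsto (fun n : ℕ => (n:ℝ)⁻¹) atTop (nhds 0) :=
      tendsto_inv_atTop_zero.comp tendsto_natCast_atTop_atTop
    have h2 : Tendsto (fun n => ((1/2:ℝ) ^ (K n + 1))) atTop (nhds 0) := by
      have hbase : Tendsto (fun k : ℕ => ((1/2:ℝ) ^ k)) atTop (nhds 0) :=
        tendsto_pow_atTop_nhds_zero_of_lt_one (by norm_num) (by norm_num)
      exact hbase.comp (tendsto_atTop_mono (fun n => Nat.le_succ (K n)) hKnat)
    have := h1.add (h2.const_mul 2)
    simpa using this
  -- eventual bound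
  apply squeeze_zero'
  · filter_upwards with n
    exact errProbCover_nonneg n (m n) (hpos n) (hp0 n) (hp1 n)
  · have hlam1 : ∀ᶠ n in atTop, (1:ℝ) ≤ lam n := hlaminf.eventually_ge_atTop 1
    have hlamn : ∀ᶠ n in atTop, lam n ≤ n := by
      have h1 : ∀ᶠ n in atTop, lam n / n < 1 := hlamo.eventually (gt_mem_nhds one_pos)
      filter_upwards [h1, eventually_ge_atTop 1] with n hn hn1
      have hnpos : (0:ℝ) < n := by exact_mod_cast hn1
      have := (div_lt_one hnpos).mp hn
      linarith
    have heps : ∀ᶠ n in atTop, 2 * Real.exp 1 ≤ lam n ^ ε := by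
      have : Tendsto (fun n => lam n ^ ε) atTop atTop :=
        (tendsto_rpow_atTop hε).comp hlaminf
      exact this.eventually_ge_atTop _
    filter_upwards [hlam1, hlamn, heps, eventually_ge_atTop 1] with n hl1 hln hle hn1
    -- notation
    set L := K n with hLdef
    have hlam0 : (0:ℝ) < lam n := hpos n
    have hsplit : lam n ^ ((1:ℝ) + ε) = lam n * lam n ^ ε := by
      rw [Real.rpow_add hlam0, Real.rpow_one]
    have hLlam : lam n * lam n ^ ε ≤ (L:ℝ) := by
      rw [← hsplit]; exact Nat.le_ceil _
    have he1 : (1:ℝ) ≤ Real.exp 1 := by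
      have := Real.add_one_le_exp 1; linarith
    have hL2e : 2 * Real.exp 1 ≤ (L:ℝ) := by
      nlinarith [Real.rpow_pos_of_pos hlam0 ε]
    have hL2 : (2:ℝ) ≤ (L:ℝ) := by linarith
    have hLpos : (0:ℝ) < (L:ℝ) := by linarith
    have hLne : (L:ℝ) ≠ 0 := ne_of_gt hLpos
    have hpn : p n = 1 / (L:ℝ) := hp n
    have hpval0 : 0 ≤ p n := hp0 n
    have hpval1 : p n ≤ 1 := hp1 n
    have hphalf : p n ≤ 1 / 2 := by
      rw [hpn, div_le_div_iff₀ hLpos (by norm_num)]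
      linarith
    have hpL : p n * (L:ℝ) = 1 := by
      rw [hpn]; field_simp
    -- main inequality
    have hmain := errProbCover_le n (m n) L hlam0 hpval0 hpval1
    -- term 1 bound
    have hnR1 : (1:ℝ) ≤ (n:ℝ) := by exact_mod_cast hn1
    have hnRpos : (0:ℝ) < (n:ℝ) := by linarith
    have hlog0 : 0 ≤ Real.log n := Real.log_nonneg hnR1
    have hq0 : 0 ≤ 1 - p n * (1 - p n) ^ L := q_nonneg hpval0 hpval1 L
    have hbase : Real.exp (-(2 * p n)) ≤ 1 - p n := exp_neg_two_le hpval0 hphalf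
    have hexp2 : Real.exp (-2) ≤ (1 - p n) ^ L := by
      have h1 : Real.exp (-(2 * p n)) ^ L = Real.exp (-2) := by
        rw [← Real.exp_nat_mul]
        congr 1
        have h2 : (L:ℝ) * -(2 * p n) = -(2 * (p n * L)) := by ring
        rw [h2, hpL]; norm_num
      calc Real.exp (-2) = Real.exp (-(2 * p n)) ^ L := h1.symm
        _ ≤ (1 - p n) ^ L := pow_le_pow_left₀ (Real.exp_nonneg _) hbase L
    have hmn : Real.exp 1 * (L:ℝ) ^ 2 * Real.log n ≤ (m n : ℝ) := by
      rw [hm n]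
      exact Nat.le_ceil _
    have hee : Real.exp (-2) * Real.exp 1 = Real.exp (-1) := by
      rw [← Real.exp_add]; norm_num
    have hee2 : Real.exp (-1) * Real.exp 1 = 1 := by
      rw [← Real.exp_add]; norm_num
    have hstep : p n * Real.exp (-2) * (Real.exp 1 * (L:ℝ) ^ 2 * Real.log n)
        = Real.exp (-1) * ((L:ℝ) * Real.log n) := by
      have h3 : p n * Real.exp (-2) * (Real.exp 1 * (L:ℝ) ^ 2 * Real.log n)
          = (p n * L) * (Real.exp (-2) * Real.exp 1) * ((L:ℝ) * Real.log n) := by ring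
      rw [h3, hpL, hee, one_mul]
    have hstep2 : 2 * Real.log n ≤ Real.exp (-1) * ((L:ℝ) * Real.log n) := by
      nlinarith [mul_nonneg (mul_nonneg (Real.exp_pos (-1)).le (sub_nonneg.mpr hL2e)) hlog0, hee2]
    have hchain : 2 * Real.log n ≤ p n * Real.exp (-2) * (m n) := by
      calc 2 * Real.log n ≤ Real.exp (-1) * ((L:ℝ) * Real.log n) := hstep2
        _ = p n * Real.exp (-2) * (Real.exp 1 * (L:ℝ) ^ 2 * Real.log n) := hstep.symm
        _ ≤ p n * Real.exp (-2) * (m n) :=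
            mul_le_mul_of_nonneg_left hmn (by positivity)
    have hterm1 : (n:ℝ) * (1 - p n * (1 - p n) ^ L) ^ (m n) ≤ (n:ℝ)⁻¹ := by
      have hqle : 1 - p n * (1 - p n) ^ L ≤ Real.exp (-(p n * Real.exp (-2))) := by
        calc 1 - p n * (1 - p n) ^ L ≤ 1 - p n * Real.exp (-2) := by nlinarith [hexp2, hpval0]
          _ ≤ Real.exp (-(p n * Real.exp (-2))) := Real.one_sub_le_exp_neg _
      have hpow : (1 - p n * (1 - p n) ^ L) ^ (m n)
          ≤ Real.exp (-(p n * Real.exp (-2) * (m n))) := by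
        calc (1 - p n * (1 - p n) ^ L) ^ (m n)
            ≤ Real.exp (-(p n * Real.exp (-2))) ^ (m n) := pow_le_pow_left₀ hq0 hqle _
          _ = Real.exp (-(p n * Real.exp (-2) * (m n))) := by
              rw [← Real.exp_nat_mul]; congr 1; ring
      have hexpmono : Real.exp (-(p n * Real.exp (-2) * (m n))) ≤ Real.exp (-(2 * Real.log n)) :=
        Real.exp_le_exp.mpr (by linarith)
      have hval : (n:ℝ) * Real.exp (-(2 * Real.log n)) = (n:ℝ)⁻¹ := by
        rw [show -(2 * Real.log n) = -Real.log n + -Real.log n by ring, Real.exp_add,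
          Real.exp_neg, Real.exp_log hnRpos]
        field_simp
      calc (n:ℝ) * (1 - p n * (1 - p n) ^ L) ^ (m n)
          ≤ (n:ℝ) * Real.exp (-(2 * Real.log n)) :=
            mul_le_mul_of_nonneg_left (hpow.trans hexpmono) (le_of_lt hnRpos)
        _ = (n:ℝ)⁻¹ := hval
    -- tail bound
    have hlamle : lam n * (2 * Real.exp 1) ≤ (L:ℝ) := by
      have := mul_le_mul_of_nonneg_left hle hlam0.le
      linarith
    have hgeomc : 2 * lam n ≤ (L:ℝ) + 2 := by nlinarith
    have htail1 := tail_le hl1 hln hgeomc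
    have hfrac : Real.exp 1 * lam n / ((L:ℝ) + 1) ≤ 1 / 2 := by
      rw [div_le_div_iff₀ (by positivity) (by norm_num)]
      nlinarith
    have htail2 : lam n ^ (L + 1) / ((L + 1).factorial : ℝ) ≤ (1/2 : ℝ) ^ (L + 1) := by
      calc lam n ^ (L + 1) / ((L + 1).factorial : ℝ)
          ≤ (Real.exp 1 * lam n / ((L:ℕ) + 1 : ℕ)) ^ (L + 1) :=
            fact_term_le hlam0.le (L + 1) (by omega)
        _ ≤ (1/2 : ℝ) ^ (L + 1) := by
            apply pow_le_pow_left₀ (by positivity)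
            push_cast
            exact hfrac
    calc errProbCover n (m n) (lam n) (p n)
        ≤ (n:ℝ) * (1 - p n * (1 - p n) ^ L) ^ (m n) +
            (∑ d ∈ Finset.Ioc L n, lam n ^ d / (d.factorial : ℝ)) /
              (∑ d ∈ Finset.range (n + 1), lam n ^ d / (d.factorial : ℝ)) := hmain
      _ ≤ (n:ℝ)⁻¹ + 2 * ((1/2 : ℝ) ^ (L + 1)) := by
          apply add_le_add hterm1
          calc (∑ d ∈ Finset.Ioc L n, lam n ^ d / (d.factorial : ℝ)) /
                (∑ d ∈ Finset.range (n + 1), lam n ^ d / (d.factorial : ℝ))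
              ≤ 2 * (lam n ^ (L + 1) / ((L + 1).factorial : ℝ)) := htail1
            _ ≤ 2 * ((1/2 : ℝ) ^ (L + 1)) := by linarith
  · exact hg
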